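/- Let p = 4k+1 be a prime and R a commutative ring of characteristic 2. For i = 0,1,2 let a_i, b_i, c_i ∈ R, set Q_i = Q_p(a_i,b_i,c_i), let A_0, A_1, A_2 be p×p circulant matrices over R, and let M be the 3p×6p block matrix with block rows (Q_0 Q_1 Q_2 | A_0 A_1 A_2), (Q_2 Q_0 Q_1 | A_2 A_0 A_1), (Q_1 Q_2 Q_0 | A_1 A_2 A_0). Then the code C generated by the rows of M is self-orthogonal if and only if both: (1) Σ_{i=0}^{2} A_i A_i^T = Q_p( Σ_{i=0}^{2} a_i^2 , Σ_{i=0}^{2} (b_i^2 + k(b_i^2 + c_i^2)) , Σ_{i=0}^{2} (c_i^2 + k(b_i^2 + c_i^2)) ); and (2) Σ_{i=0}^{2} A_i A_{[i+2]_3}^T = Q_p( Σ_{i=0}^{2} a_i a_{[i+2]_3} , Σ_{i=0}^{2} ( a_i b_{[i+2]_3} + b_i a_{[i+2]_3} + (k+1) b_i b_{[i+2]_3} + k (b_i c_{[i+2]_3} + c_i b_{[i+2]_3}) + k c_i c_{[i+2]_3} ) , Σ_{i=0}^{2} ( a_i c_{[i+2]_3} + c_i a_{[i+2]_3} + k b_i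 b_{[i+2]_3} + k (b_i c_{[i+2]_3} + c_i b_{[i+2]_3}) + (k+1) c_i c_{[i+2]_3} ) ). -/

import Mathlib

open Matrix
open scoped Classical

/-- The quadratic residue circulant matrix `Q_p(a,b,c)`: the `p × p` matrix over `R`,
indexed by `ZMod p`, whose `(i,j)` entry is `a` if `i = j`, `b` if `j - i` is a
nonzero quadratic residue modulo `p`, and `c` otherwise. -/
noncomputable def Qmat (p : ℕ) {R : Type*} [CommRing R] (a b c : R) :
    Matrix (ZMod p) (ZMod p) R :=
  Matrix.of fun i j => if i = j then a else if IsSquare (j - i) then b else c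

/-- The `3×3` block circulant matrix `CIRC(B 0, B 1, B 2)` whose block rows are
`(B 0, B 1, B 2)`, `(B 2, B 0, B 1)`, `(B 1, B 2, B 0)`. -/
def blockCirc {R n : Type*} (B : ZMod 3 → Matrix n n R) :
    Matrix (ZMod 3 × n) (ZMod 3 × n) R :=
  Matrix.of fun ix jy => B (jy.1 - ix.1) ix.2 jy.2

/-- The `3p × 6p` block matrix with block rows `(Q 0, Q 1, Q 2 | A 0, A 1, A 2)`,
`(Q 2, Q 0, Q 1 | A 2, A 0, A 1)`, `(Q 1, Q 2, Q 0 | A 1, A 2, A 0)`. -/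
def Mblk {R n : Type*} (Q A : ZMod 3 → Matrix n n R) :
    Matrix (ZMod 3 × n) ((ZMod 3 × n) ⊕ (ZMod 3 × n)) R :=
  Matrix.fromCols (blockCirc Q) (blockCirc A)

set_option linter.unusedSectionVars false
set_option linter.unusedVariables false
set_option maxHeartbeats 1000000

section parity
variable {α : Type*}

/-- parity of a finset with an involution equals parity of its fixed points -/
lemma card_parity_invol [DecidableEq α] (s : Finset α) (g : α → α)
    (h1 : ∀ a ∈ s, g a ∈ s) (h2 : ∀ a ∈ s, g (g a) = a) :
    ((s.card : ZMod 2)) = (((s.filter fun a => g a = a)).card : ZMod 2) := by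
  classical
  have hsplit := Finset.card_filter_add_card_filter_not (s := s)
    (p := fun a => g a = a)
  have hmov : ((s.filter fun a => ¬ g a = a).card : ZMod 2) = 0 := by
    have : ∑ _x ∈ (s.filter fun a => ¬ g a = a), (1 : ZMod 2) = 0 := by
      refine Finset.sum_involution (fun a _ => g a) (fun a ha => ?_) (fun a ha _ => ?_)
        (fun a ha => ?_) (fun a ha => ?_)
      · decide
      · exact (Finset.mem_filter.mp ha).2
      · rcases Finset.mem_filter.mp ha with ⟨hs, hne⟩
        refine Finset.mem_filter.mpr ⟨h1 a hs, ?_⟩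
        rw [h2 a hs]; exact fun h => hne h.symm
      · exact h2 a (Finset.mem_filter.mp ha).1
    simpa using this
  have := congrArg (fun n : ℕ => (n : ZMod 2)) hsplit
  simp only [Nat.cast_add] at this
  rw [hmov] at this
  rw [add_zero] at this
  exact this.symm

end parity

section numtheory
variable (p k : ℕ) [Fact (Nat.Prime p)]

lemma p_odd (hpk : p = 4*k+1) : p % 2 = 1 := by omega

lemma k_pos (hpk : p = 4*k+1) : 1 ≤ k := by
  rcases Nat.lt_or_ge k 1 with h | h
  · interval_cases k
    · exfalso; simp [hpk] at *; exact absurd (Fact.out : Nat.Prime 1) (by norm_num)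
  · exact h

lemma sq_neg_iff (hpk : p = 4*k+1) (x : ZMod p) : IsSquare (-x) ↔ IsSquare x := by
  have h1 : IsSquare (-1 : ZMod p) := by
    rw [ZMod.exists_sq_eq_neg_one_iff]; omega
  constructor
  · intro h
    have := h1.mul h
    simpa using this
  · intro h
    simpa using h1.mul h

lemma sq_mul_iff (x y : ZMod p) (hx : x ≠ 0) (hy : y ≠ 0) :
    IsSquare (x * y) ↔ (IsSquare x ↔ IsSquare y) := by
  have hxy : x * y ≠ 0 := mul_ne_zero hx hy
  have hx1 := quadraticChar_one_iff_isSquare (F := ZMod p) hx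
  have hy1 := quadraticChar_one_iff_isSquare (F := ZMod p) hy
  have hxy1 := quadraticChar_one_iff_isSquare (F := ZMod p) hxy
  have hmul : quadraticChar (ZMod p) (x * y) =
      quadraticChar (ZMod p) x * quadraticChar (ZMod p) y := map_mul _ _ _
  rw [← hx1, ← hy1, ← hxy1, hmul]
  rcases quadraticChar_dichotomy hx with h | h <;>
    rcases quadraticChar_dichotomy hy with h' | h' <;> rw [h, h'] <;> norm_num

end numtheory

set_option linter.unusedSectionVars false

section cards
variable (p k : ℕ) [Fact (Nat.Prime p)]

lemma twoNeZeroZMod (hpk : p = 4*k+1) : (2 : ZMod p) ≠ 0 := by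
  have : ((2:ℕ) : ZMod p) ≠ 0 := by
    rw [Ne, ZMod.natCast_eq_zero_iff]
    intro h
    have := Nat.le_of_dvd (by norm_num) h
    have := k_pos p k hpk
    omega
  simpa using this

lemma sq_two_iff (hpk : p = 4*k+1) : IsSquare (2 : ZMod p) ↔ k % 2 = 0 := by
  rw [ZMod.exists_sq_eq_two_iff (by omega : p ≠ 2)]
  omega

lemma natCast_zmod2 (k : ℕ) : (k : ZMod 2) = if k % 2 = 0 then 0 else 1 := by
  rw [← ZMod.natCast_mod k 2]
  have h : k % 2 = 0 ∨ k % 2 = 1 := by omega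
  rcases h with h | h <;> rw [h] <;> simp

lemma card_S0 (hpk : p = 4*k+1) :
    (((Finset.univ.filter fun t : ZMod p => t ≠ 0 ∧ IsSquare t)).card : ZMod 2) = 0 := by
  rw [card_parity_invol _ (fun t => -t)
    (by rintro a ha
        rcases Finset.mem_filter.mp ha with ⟨-, h0, hs⟩
        exact Finset.mem_filter.mpr ⟨Finset.mem_univ _, neg_ne_zero.mpr h0,
          (sq_neg_iff p k hpk a).mpr hs⟩)
    (by intro a _; simp)]
  have hemp : (Finset.filter (fun a => (fun t => -t) a = a)
      (Finset.univ.filter fun t : ZMod p => t ≠ 0 ∧ IsSquare t)) = ∅ := by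
    apply Finset.eq_empty_of_forall_notMem
    intro a ha
    rcases Finset.mem_filter.mp ha with ⟨ha', hfix⟩
    rcases Finset.mem_filter.mp ha' with ⟨-, h0, -⟩
    apply h0
    have h2 : (2 : ZMod p) * a = 0 := by rw [two_mul]; linear_combination -hfix
    rcases mul_eq_zero.mp h2 with h | h
    · exact absurd h (twoNeZeroZMod p k hpk)
    · exact h
  rw [hemp]
  simp

lemma card_pair (hpk : p = 4*k+1) (d : ZMod p) (hd : d ≠ 0) :
    (((Finset.univ.filter fun t : ZMod p =>
        (t ≠ 0 ∧ IsSquare t) ∧ (t - d ≠ 0 ∧ IsSquare (t - d)))).card : ZMod 2)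
      = (if IsSquare d then 1 else 0) + (k : ZMod 2) := by
  have hne2 := twoNeZeroZMod p k hpk
  set u : ZMod p := (2 : ZMod p)⁻¹ * d with hu
  have hu0 : u ≠ 0 := by simp [hu, inv_ne_zero hne2, hd]
  have h2u : (2 : ZMod p) * u = d := by
    rw [hu, ← mul_assoc, mul_inv_cancel₀ hne2, one_mul]
  have humd : u - d = -u := by linear_combination h2u
  rw [card_parity_invol _ (fun t => d - t)
    (by rintro a ha
        rcases Finset.mem_filter.mp ha with ⟨-, ⟨h0, hs⟩, hd0, hds⟩
        refine Finset.mem_filter.mpr ⟨Finset.mem_univ _, ⟨?_, ?_⟩, ?_, ?_⟩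
        · show d - a ≠ 0
          intro h; apply hd0
          show a - d = 0; linear_combination -h
        · show IsSquare (d - a)
          rw [show d - a = -(a - d) by ring, sq_neg_iff p k hpk]; exact hds
        · show d - a - d ≠ 0
          intro h; apply h0
          show a = 0; linear_combination -h
        · show IsSquare (d - a - d)
          rw [show d - a - d = -a by ring, sq_neg_iff p k hpk]; exact hs)
    (by intro a _; show d - (d - a) = a; ring)]
  have hfix : (Finset.filter (fun a => (fun t => d - t) a = a)
      (Finset.univ.filter fun t : ZMod p =>
        (t ≠ 0 ∧ IsSquare t) ∧ (t - d ≠ 0 ∧ IsSquare (t - d))))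
      = if IsSquare u then {u} else ∅ := by
    ext a
    simp only [Finset.mem_filter, Finset.mem_univ, true_and]
    constructor
    · rintro ⟨⟨⟨h0, hs⟩, -⟩, hfa⟩
      have hfa' : d - a = a := hfa
      have hau : a = u := by
        have h2a : (2 : ZMod p) * a = d := by linear_combination -hfa'
        rw [hu, ← h2a, ← mul_assoc, inv_mul_cancel₀ hne2, one_mul]
      rw [if_pos (hau ▸ hs)]
      simp [hau]
    · intro ha
      by_cases hsu : IsSquare u
      · rw [if_pos hsu] at ha
        rcases Finset.mem_singleton.mp ha with rfl
        refine ⟨⟨⟨hu0, hsu⟩, ?_, ?_⟩, ?_⟩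
        · rw [humd]; simpa using hu0
        · rw [humd, sq_neg_iff p k hpk]; exact hsu
        · show d - u = u; linear_combination -h2u
      · rw [if_neg hsu] at ha
        simp at ha
  rw [hfix]
  have hiff : IsSquare u ↔ (IsSquare ((2:ZMod p)⁻¹) ↔ IsSquare d) :=
    sq_mul_iff p _ _ (inv_ne_zero hne2) hd
  have hinv : IsSquare ((2:ZMod p)⁻¹) ↔ IsSquare (2 : ZMod p) := isSquare_inv
  have h2k := sq_two_iff p k hpk
  rcases Nat.even_or_odd k with hk | hk
  · have hk0 : k % 2 = 0 := Nat.even_iff.mp hk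
    have hk2 : (k : ZMod 2) = 0 := by rw [natCast_zmod2, if_pos hk0]
    rw [hk2]
    have h2sq : IsSquare (2 : ZMod p) := h2k.mpr hk0
    by_cases hsd : IsSquare d
    · have : IsSquare u := hiff.mpr (by tauto)
      rw [if_pos this, if_pos hsd]; simp
    · have : ¬ IsSquare u := fun h => hsd ((hiff.mp h).mp (hinv.mpr h2sq))
      rw [if_neg this, if_neg hsd]; simp
  · have hk1 : k % 2 = 1 := Nat.odd_iff.mp hk
    have hk0 : ¬ (k % 2 = 0) := by omega
    have hk2 : (k : ZMod 2) = 1 := by rw [natCast_zmod2, if_neg hk0]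
    rw [hk2]
    have h2sq : ¬ IsSquare (2 : ZMod p) := fun h => by
      have := h2k.mp h; omega
    by_cases hsd : IsSquare d
    · have : ¬ IsSquare u := fun h => h2sq (hinv.mp ((hiff.mp h).mpr hsd))
      rw [if_neg this, if_pos hsd]
      simp only [Finset.card_empty, Nat.cast_zero]
      decide
    · have : IsSquare u := by
        rw [hiff, hinv]
        exact ⟨fun h => absurd h h2sq, fun h => absurd h hsd⟩
      rw [if_pos this, if_neg hsd]
      simp only [Finset.card_singleton, Nat.cast_one]
      decide

end cards


noncomputable def qv (p : ℕ) {R : Type*} [CommRing R] (a b c : R) (t : ZMod p) : R :=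
  if t = 0 then a else if IsSquare t then b else c

noncomputable def eef (p : ℕ) (R : Type*) [CommRing R] (t : ZMod p) : R :=
  if t = 0 then 1 else 0

noncomputable def ssf (p : ℕ) (R : Type*) [CommRing R] (t : ZMod p) : R :=
  if t ≠ 0 ∧ IsSquare t then 1 else 0

section scalar
variable {R : Type*} [CommRing R] [CharP R 2] (p k : ℕ) [Fact (Nat.Prime p)]

lemma cast_zmod2_zero {n : ℕ} (h : (n : ZMod 2) = 0) : (n : R) = 0 := by
  rw [ZMod.natCast_eq_zero_iff] at h
  rcases h with ⟨m, rfl⟩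
  push_cast
  rw [show ((2:R)) = 0 from CharTwo.two_eq_zero, zero_mul]

lemma cast_zmod2_one {n : ℕ} (h : (n : ZMod 2) = 1) : (n : R) = 1 := by
  have h2 : n % 2 = 1 := by
    by_contra hc
    have h0 : n % 2 = 0 := by omega
    have := natCast_zmod2 n
    rw [if_pos h0] at this
    rw [this] at h
    exact absurd h (by decide)
  obtain ⟨m, rfl⟩ : ∃ m, n = 2 * m + 1 := ⟨n / 2, by omega⟩
  push_cast
  rw [show ((2:R)) = 0 from CharTwo.two_eq_zero]
  ring

lemma Qmat_apply (a b c : R) (i j : ZMod p) :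
    Qmat p a b c i j = qv p a b c (j - i) := by
  simp only [Qmat, qv, Matrix.of_apply, sub_eq_zero]
  rcases eq_or_ne i j with h | h
  · rw [if_pos h, if_pos h.symm]
  · rw [if_neg h, if_neg (Ne.symm h)]

lemma qv_expand (a b c : R) (t : ZMod p) :
    qv p a b c t = (a + c) * eef p R t + (b + c) * ssf p R t + c := by
  unfold qv eef ssf
  rcases eq_or_ne t 0 with rfl | h
  · rw [if_pos rfl, if_pos rfl, if_neg (by simp : ¬((0 : ZMod p) ≠ 0 ∧ IsSquare (0:ZMod p)))]
    linear_combination (-c : R) * (CharTwo.two_eq_zero (R := R))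
  · rw [if_neg h, if_neg h]
    by_cases hs : IsSquare t
    · rw [if_pos hs, if_pos ⟨h, hs⟩]
      linear_combination (-c : R) * (CharTwo.two_eq_zero (R := R))
    · rw [if_neg hs, if_neg (fun hc : t ≠ 0 ∧ IsSquare t => hs hc.2)]
      ring

lemma sum_e_mul (X : ZMod p → R) : ∑ t : ZMod p, eef p R t * X t = X 0 := by
  rw [Finset.sum_eq_single 0]
  · simp [eef]
  · intro t _ ht; simp [eef, ht]
  · intro h; exact absurd (Finset.mem_univ _) h

lemma sum_mul_e (d : ZMod p) (X : ZMod p → R) :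
    ∑ t : ZMod p, X t * eef p R (t - d) = X d := by
  rw [Finset.sum_eq_single d]
  · simp [eef]
  · intro t _ ht; simp [eef, sub_eq_zero, ht]
  · intro h; exact absurd (Finset.mem_univ _) h

lemma eef_neg (d : ZMod p) : eef p R (-d) = eef p R d := by
  simp [eef, neg_eq_zero]

lemma qv_neg (hpk : p = 4*k+1) (a b c : R) (t : ZMod p) :
    qv p a b c (-t) = qv p a b c t := by
  unfold qv
  by_cases h0 : t = 0
  · rw [h0, neg_zero]
  · rw [if_neg (fun hc => h0 (neg_eq_zero.mp hc)), if_neg h0]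
    by_cases hs : IsSquare t
    · rw [if_pos ((sq_neg_iff p k hpk _).mpr hs), if_pos hs]
    · rw [if_neg (fun hc => hs ((sq_neg_iff p k hpk _).mp hc)), if_neg hs]

lemma ssf_neg (hpk : p = 4*k+1) (d : ZMod p) : ssf p R (-d) = ssf p R d := by
  unfold ssf
  by_cases h : d ≠ 0 ∧ IsSquare d
  · rw [if_pos h, if_pos ⟨neg_ne_zero.mpr h.1, (sq_neg_iff p k hpk d).mpr h.2⟩]
  · rw [if_neg h, if_neg ?_]
    intro hc
    exact h ⟨fun h0 => hc.1 (by rw [h0, neg_zero]), (sq_neg_iff p k hpk d).mp hc.2⟩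

lemma sum_indicator (P : ZMod p → Prop) [DecidablePred P] :
    (∑ t : ZMod p, if P t then (1:R) else 0) = ((Finset.univ.filter P).card : R) := by
  rw [Finset.sum_ite, Finset.sum_const, Finset.sum_const_zero, add_zero, nsmul_eq_mul, mul_one]

lemma sum_s (hpk : p = 4*k+1) : ∑ t : ZMod p, ssf p R t = 0 := by
  have hpt : ∀ t : ZMod p, ssf p R t = if t ≠ 0 ∧ IsSquare t then (1:R) else 0 := by
    intro t; unfold ssf; split_ifs <;> rfl
  rw [Finset.sum_congr rfl fun t _ => hpt t,
    sum_indicator (R := R) p (fun t : ZMod p => t ≠ 0 ∧ IsSquare t)]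
  exact cast_zmod2_zero (card_S0 p k hpk)

lemma sum_s_shift (hpk : p = 4*k+1) (d : ZMod p) :
    ∑ t : ZMod p, ssf p R (t - d) = 0 := by
  rw [show (∑ t : ZMod p, ssf p R (t - d)) = ∑ t : ZMod p, ssf p R t from
    Fintype.sum_equiv (Equiv.subRight d) _ _ (by intro t; rfl)]
  exact sum_s p k hpk

lemma sum_const_one (hpk : p = 4*k+1) : ∑ _t : ZMod p, (1 : R) = 1 := by
  rw [Finset.sum_const, Finset.card_univ, ZMod.card, nsmul_eq_mul, mul_one, hpk]
  push_cast
  linear_combination (2*(k:R)) * (CharTwo.two_eq_zero (R := R))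

lemma sum_ss (hpk : p = 4*k+1) (d : ZMod p) :
    ∑ t : ZMod p, ssf p R t * ssf p R (t - d) =
      if d = 0 then 0 else (k : R) + ssf p R d := by
  rcases eq_or_ne d 0 with rfl | hd
  · rw [if_pos rfl]
    have h0 : ∀ t : ZMod p, ssf p R t * ssf p R (t - 0) = ssf p R t := by
      intro t; rw [sub_zero]; unfold ssf; split_ifs <;> ring
    rw [Finset.sum_congr rfl fun t _ => h0 t]
    exact sum_s p k hpk
  · rw [if_neg hd]
    have h1 : ∀ t : ZMod p, ssf p R t * ssf p R (t - d) =
        if (t ≠ 0 ∧ IsSquare t) ∧ (t - d ≠ 0 ∧ IsSquare (t - d)) then (1:R) else 0 := by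
      intro t; unfold ssf
      by_cases h : t ≠ 0 ∧ IsSquare t <;> by_cases h' : t - d ≠ 0 ∧ IsSquare (t - d)
      · rw [if_pos h, if_pos h', if_pos ⟨h, h'⟩]; ring
      · rw [if_pos h, if_neg h', if_neg (fun hc => h' hc.2)]; ring
      · rw [if_neg h, if_pos h', if_neg (fun hc => h hc.1)]; ring
      · rw [if_neg h, if_neg h', if_neg (fun hc => h hc.1)]; ring
    rw [Finset.sum_congr rfl fun t _ => h1 t,
      sum_indicator (R := R) p (fun t : ZMod p => (t ≠ 0 ∧ IsSquare t) ∧ (t - d ≠ 0 ∧ IsSquare (t - d)))]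
    have hcp := card_pair p k hpk d hd
    rcases Nat.even_or_odd k with hk | hk
    · have hk0 : k % 2 = 0 := Nat.even_iff.mp hk
      have hk2 : (k : ZMod 2) = 0 := by rw [natCast_zmod2, if_pos hk0]
      have hkR : (k : R) = 0 := cast_zmod2_zero (by rw [natCast_zmod2, if_pos hk0])
      rw [hk2, add_zero] at hcp
      by_cases hsd : IsSquare d
      · rw [if_pos hsd] at hcp
        have := cast_zmod2_one (R := R) hcp
        rw [this, hkR]
        unfold ssf; rw [if_pos ⟨hd, hsd⟩]; ring
      · rw [if_neg hsd] at hcp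
        have := cast_zmod2_zero (R := R) hcp
        rw [this, hkR]
        unfold ssf; rw [if_neg (fun hc => hsd hc.2)]; ring
    · have hk0 : ¬ (k % 2 = 0) := by have := Nat.odd_iff.mp hk; omega
      have hk2 : (k : ZMod 2) = 1 := by rw [natCast_zmod2, if_neg hk0]
      have hkR : (k : R) = 1 := cast_zmod2_one (by rw [natCast_zmod2, if_neg hk0])
      rw [hk2] at hcp
      by_cases hsd : IsSquare d
      · rw [if_pos hsd] at hcp
        norm_num at hcp
        have := cast_zmod2_zero (R := R) hcp
        rw [this, hkR]
        unfold ssf; rw [if_pos ⟨hd, hsd⟩]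
        linear_combination (-1 : R) * (CharTwo.two_eq_zero (R := R))
      · rw [if_neg hsd] at hcp
        norm_num at hcp
        have := cast_zmod2_one (R := R) hcp
        rw [this, hkR]
        unfold ssf; rw [if_neg (fun hc => hsd hc.2)]; ring

end scalar

section conv
variable {R : Type*} [CommRing R] [CharP R 2] (p k : ℕ) [Fact (Nat.Prime p)]

lemma qv_conv (hpk : p = 4*k+1) (a b c a' b' c' : R) (d : ZMod p) :
    ∑ t : ZMod p, qv p a b c t * qv p a' b' c' (t - d) =
      qv p (a*a')
        (a*b' + b*a' + ((k:R)+1)*(b*b') + (k:R)*(b*c' + c*b') + (k:R)*(c*c'))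
        (a*c' + c*a' + (k:R)*(b*b') + (k:R)*(b*c' + c*b') + ((k:R)+1)*(c*c')) d := by
  have expand : ∀ t : ZMod p, qv p a b c t * qv p a' b' c' (t - d) =
      (a+c)*(a'+c') * (eef p R t * eef p R (t - d))
    + (a+c)*(b'+c') * (eef p R t * ssf p R (t - d))
    + (a+c)*c' * eef p R t
    + (b+c)*(a'+c') * (ssf p R t * eef p R (t - d))
    + (b+c)*(b'+c') * (ssf p R t * ssf p R (t - d))
    + (b+c)*c' * ssf p R t
    + c*(a'+c') * eef p R (t - d)
    + c*(b'+c') * ssf p R (t - d)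
    + c*c' * 1 := by
    intro t
    rw [qv_expand p a b c t, qv_expand p a' b' c' (t - d)]
    ring
  rw [Finset.sum_congr rfl fun t _ => expand t]
  repeat rw [Finset.sum_add_distrib]
  simp only [← Finset.mul_sum]
  have h1 : ∑ t : ZMod p, eef p R t * eef p R (t - d) = eef p R d := by
    rw [sum_e_mul p (fun t => eef p R (t - d)), zero_sub, eef_neg]
  have h2 : ∑ t : ZMod p, eef p R t * ssf p R (t - d) = ssf p R d := by
    rw [sum_e_mul p (fun t => ssf p R (t - d)), zero_sub, ssf_neg p k hpk]
  have h3 : ∑ t : ZMod p, eef p R t = 1 := by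
    have := sum_e_mul p (fun _ : ZMod p => (1:R))
    simpa using this
  have h4 : ∑ t : ZMod p, ssf p R t * eef p R (t - d) = ssf p R d :=
    sum_mul_e p d (ssf p R)
  have h5 := sum_ss p k (R := R) hpk d
  have h6 := sum_s p k hpk (R := R)
  have h7 : ∑ t : ZMod p, eef p R (t - d) = 1 := by
    have := sum_mul_e p d (fun _ : ZMod p => (1:R))
    simpa using this
  have h8 := sum_s_shift p k hpk (R := R) d
  have h9 := sum_const_one p k hpk (R := R)
  rw [h1, h2, h3, h4, h5, h6, h7, h8, h9]
  rcases eq_or_ne d 0 with rfl | hd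
  · rw [if_pos rfl]
    have he : eef p R 0 = 1 := by unfold eef; rw [if_pos rfl]
    have hs : ssf p R 0 = 0 := by unfold ssf; rw [if_neg (by simp)]
    unfold qv
    rw [if_pos rfl, he, hs]
    linear_combination (a*c' + c*a' + 2*(c*c')) * (CharTwo.two_eq_zero (R := R))
  · have he : eef p R d = 0 := by unfold eef; rw [if_neg hd]
    rw [if_neg hd, he]
    unfold qv
    rw [if_neg hd]
    by_cases hsd : IsSquare d
    · have hs : ssf p R d = 1 := by unfold ssf; rw [if_pos ⟨hd, hsd⟩]
      rw [hs, if_pos hsd]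
      linear_combination ((a+c)*(b'+c') + (b+c)*(a'+c') + c*(b'+c') + (b+c)*(b'+c')
        + (b+c)*c' + c*c' + c*(a'+c') + (k:R)*((b+c)*(b'+c'))
        + (-(a*b') - c*a' - 4*(c*c') - (c*c')*(k:R) - 2*(c*b') - (c*b')*(k:R) - a'*b
          - 2*(b*c') - (b*c')*(k:R) - b*b' - (b*b')*(k:R))) * (CharTwo.two_eq_zero (R := R))
    · have hs : ssf p R d = 0 := by unfold ssf; rw [if_neg (fun hc => hsd hc.2)]
      rw [hs, if_neg hsd]
      linear_combination (c*c' + c*(a'+c') + c*(b'+c') + (b+c)*c'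
        + (k:R)*((b+c)*(b'+c'))
        + (-(c*a') - 3*(c*c') - (c*c')*(k:R) - c*b' - (c*b')*(k:R) - b*c' - (b*c')*(k:R)
          - (b*b')*(k:R))) * (CharTwo.two_eq_zero (R := R))

end conv


section matrices
variable {R : Type*} [CommRing R] [CharP R 2] (p k : ℕ) [Fact (Nat.Prime p)]

lemma Qmat_transpose (hpk : p = 4*k+1) (a b c : R) :
    (Qmat p a b c)ᵀ = Qmat p a b c := by
  ext i j
  rw [Matrix.transpose_apply, Qmat_apply, Qmat_apply,
    show i - j = -(j - i) by ring, qv_neg p k hpk]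

lemma Qmul (hpk : p = 4*k+1) (a b c a' b' c' : R) :
    Qmat p a b c * Qmat p a' b' c' =
      Qmat p (a*a')
        (a*b' + b*a' + ((k:R)+1)*(b*b') + (k:R)*(b*c' + c*b') + (k:R)*(c*c'))
        (a*c' + c*a' + (k:R)*(b*b') + (k:R)*(b*c' + c*b') + ((k:R)+1)*(c*c')) := by
  ext i j
  rw [Matrix.mul_apply, Qmat_apply]
  rw [show ∑ l : ZMod p, Qmat p a b c i l * Qmat p a' b' c' l j
      = ∑ t : ZMod p, qv p a b c t * qv p a' b' c' (t - (j - i)) from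
    Fintype.sum_equiv (Equiv.subRight i) _ _ (by
      intro l
      simp only [Equiv.subRight_apply, Qmat_apply]
      congr 1
      rw [show j - l = -((l - i) - (j - i)) by ring, qv_neg p k hpk])]
  exact qv_conv p k hpk a b c a' b' c' (j - i)

lemma Qmat_sum {ι : Type*} (s : Finset ι) (f g h : ι → R) :
    ∑ i ∈ s, Qmat p (f i) (g i) (h i) =
      Qmat p (∑ i ∈ s, f i) (∑ i ∈ s, g i) (∑ i ∈ s, h i) := by
  ext x y
  rw [Matrix.sum_apply]
  unfold Qmat
  simp only [Matrix.of_apply]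
  by_cases h1 : x = y
  · rw [if_pos h1, Finset.sum_congr rfl fun i _ => if_pos h1]
  · by_cases h2 : IsSquare (y - x)
    · rw [if_neg h1, if_pos h2,
        Finset.sum_congr rfl fun i _ => by rw [if_neg h1, if_pos h2]]
    · rw [if_neg h1, if_neg h2,
        Finset.sum_congr rfl fun i _ => by rw [if_neg h1, if_neg h2]]

lemma blockCirc_mul {n : Type*} [Fintype n] (B C : ZMod 3 → Matrix n n R) :
    blockCirc B * (blockCirc C)ᵀ =
      blockCirc (fun d => ∑ m : ZMod 3, B m * (C (m - d))ᵀ) := by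
  ext ⟨i, x⟩ ⟨j, y⟩
  rw [Matrix.mul_apply]
  show ∑ lz : ZMod 3 × n, B (lz.1 - i) x lz.2 * C (lz.1 - j) y lz.2
    = (∑ m : ZMod 3, B m * (C (m - (j - i)))ᵀ) x y
  rw [Matrix.sum_apply, Fintype.sum_prod_type]
  refine Fintype.sum_equiv (Equiv.subRight i) _ _ ?_
  intro l
  simp only [Equiv.subRight_apply, Matrix.mul_apply, Matrix.transpose_apply]
  refine Finset.sum_congr rfl fun z _ => ?_
  rw [show l - i - (j - i) = l - j by ring]

lemma blockCirc_add {n : Type*} (B C : ZMod 3 → Matrix n n R) :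
    blockCirc B + blockCirc C = blockCirc (fun d => B d + C d) := rfl

lemma blockCirc_eq_zero {n : Type*} [Nonempty n] (B : ZMod 3 → Matrix n n R) :
    blockCirc B = 0 ↔ ∀ d, B d = 0 := by
  constructor
  · intro h d
    ext x y
    have := congrFun (congrFun h (0, x)) (d, y)
    simpa [blockCirc] using this
  · intro h
    ext ⟨i, x⟩ ⟨j, y⟩
    show B (j - i) x y = 0
    rw [h (j - i)]
    rfl

end matrices

section span
variable {R : Type*} [CommRing R]

lemma selfOrth_iff {m n : Type*} [Fintype m] [Fintype n] (M : Matrix m n R) :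
    (∀ x ∈ Submodule.span R (Set.range fun i => M i),
      ∀ y ∈ Submodule.span R (Set.range fun i => M i),
        dotProduct x y = 0) ↔ M * Mᵀ = 0 := by
  constructor
  · intro h
    ext i j
    have := h (M i) (Submodule.subset_span ⟨i, rfl⟩)
      (M j) (Submodule.subset_span ⟨j, rfl⟩)
    simpa [Matrix.mul_apply, dotProduct, Matrix.transpose_apply] using this
  · intro h x hx y hy
    induction hx, hy using Submodule.span_induction₂ with
    | mem_mem u v hu hv =>
      rcases hu with ⟨i, rfl⟩
      rcases hv with ⟨j, rfl⟩
      have := congrFun (congrFun h i) j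
      simpa [Matrix.mul_apply, dotProduct, Matrix.transpose_apply] using this
    | zero_left v hv => simp [dotProduct]
    | zero_right u hu => simp [dotProduct]
    | add_left u v w hu hv hw h1 h2 => rw [add_dotProduct, h1, h2, add_zero]
    | add_right u v w hu hv hw h1 h2 => rw [dotProduct_add, h1, h2, add_zero]
    | smul_left r u v hu hv h1 => rw [smul_dotProduct, h1, smul_zero]
    | smul_right r u v hu hv h1 => rw [dotProduct_smul, h1, smul_zero]

end span

section core
variable {R : Type*} [CommRing R] [CharP R 2] (p k : ℕ) [Fact (Nat.Prime p)]

lemma main_core (hpk : p = 4*k+1) (a b c : ZMod 3 → R)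
    (A : ZMod 3 → Matrix (ZMod p) (ZMod p) R) :
    (∀ d : ZMod 3,
      (∑ m : ZMod 3,
          Qmat p (a m) (b m) (c m) * (Qmat p (a (m - d)) (b (m - d)) (c (m - d)))ᵀ)
        + (∑ m : ZMod 3, A m * (A (m - d))ᵀ) = 0)
    ↔ ((∑ i : ZMod 3, A i * (A i)ᵀ =
        Qmat p (∑ i : ZMod 3, (a i) ^ 2)
          (∑ i : ZMod 3, ((b i) ^ 2 + (k : R) * ((b i) ^ 2 + (c i) ^ 2)))
          (∑ i : ZMod 3, ((c i) ^ 2 + (k : R) * ((b i) ^ 2 + (c i) ^ 2)))) ∧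
       (∑ i : ZMod 3, A i * (A (i + 2))ᵀ =
        Qmat p (∑ i : ZMod 3, a i * a (i + 2))
          (∑ i : ZMod 3, (a i * b (i + 2) + b i * a (i + 2) + ((k : R) + 1) * (b i * b (i + 2)) +
            (k : R) * (b i * c (i + 2) + c i * b (i + 2)) + (k : R) * (c i * c (i + 2))))
          (∑ i : ZMod 3, (a i * c (i + 2) + c i * a (i + 2) + (k : R) * (b i * b (i + 2)) +
            (k : R) * (b i * c (i + 2) + c i * b (i + 2)) +
            ((k : R) + 1) * (c i * c (i + 2)))))) := by
  have hchar : ∀ X Y : Matrix (ZMod p) (ZMod p) R, (X + Y = 0 ↔ Y = X) := by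
    intro X Y
    constructor
    · intro h
      ext i j
      have h' := congrFun (congrFun h i) j
      simp only [Matrix.add_apply, Matrix.zero_apply] at h'
      linear_combination h' - X i j * (CharTwo.two_eq_zero (R := R))
    · intro h
      rw [h]
      ext i j
      simp only [Matrix.add_apply, Matrix.zero_apply]
      exact CharTwo.add_self_eq_zero _
  have e11 : ∀ x : ZMod 3, x - 1 = x + 2 := by decide
  have key0 : (∑ m : ZMod 3,
        Qmat p (a m) (b m) (c m) * (Qmat p (a m) (b m) (c m))ᵀ) =
      Qmat p (∑ i : ZMod 3, (a i) ^ 2)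
        (∑ i : ZMod 3, ((b i) ^ 2 + (k : R) * ((b i) ^ 2 + (c i) ^ 2)))
        (∑ i : ZMod 3, ((c i) ^ 2 + (k : R) * ((b i) ^ 2 + (c i) ^ 2))) := by
    rw [Finset.sum_congr rfl fun m _ => by
      rw [Qmat_transpose p k hpk, Qmul p k hpk], Qmat_sum]
    rw [show (∑ m : ZMod 3, a m * a m) = ∑ i : ZMod 3, (a i) ^ 2 from
      Finset.sum_congr rfl fun m _ => by ring]
    rw [show (∑ m : ZMod 3, (a m * b m + b m * a m + ((k:R)+1)*(b m * b m)
          + (k:R)*(b m * c m + c m * b m) + (k:R)*(c m * c m)))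
        = ∑ i : ZMod 3, ((b i) ^ 2 + (k : R) * ((b i) ^ 2 + (c i) ^ 2)) from
      Finset.sum_congr rfl fun m _ => by
        linear_combination (a m * b m + (k:R)*(b m * c m)) * (CharTwo.two_eq_zero (R := R))]
    rw [show (∑ m : ZMod 3, (a m * c m + c m * a m + (k:R)*(b m * b m)
          + (k:R)*(b m * c m + c m * b m) + ((k:R)+1)*(c m * c m)))
        = ∑ i : ZMod 3, ((c i) ^ 2 + (k : R) * ((b i) ^ 2 + (c i) ^ 2)) from
      Finset.sum_congr rfl fun m _ => by
        linear_combination (a m * c m + (k:R)*(b m * c m)) * (CharTwo.two_eq_zero (R := R))]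
  have key1 : (∑ m : ZMod 3,
        Qmat p (a m) (b m) (c m) * (Qmat p (a (m + 2)) (b (m + 2)) (c (m + 2)))ᵀ) =
      Qmat p (∑ i : ZMod 3, a i * a (i + 2))
        (∑ i : ZMod 3, (a i * b (i + 2) + b i * a (i + 2) + ((k : R) + 1) * (b i * b (i + 2)) +
          (k : R) * (b i * c (i + 2) + c i * b (i + 2)) + (k : R) * (c i * c (i + 2))))
        (∑ i : ZMod 3, (a i * c (i + 2) + c i * a (i + 2) + (k : R) * (b i * b (i + 2)) +
          (k : R) * (b i * c (i + 2) + c i * b (i + 2)) +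
          ((k : R) + 1) * (c i * c (i + 2)))) := by
    rw [Finset.sum_congr rfl fun m _ => by
      rw [Qmat_transpose p k hpk, Qmul p k hpk], Qmat_sum]
  have htrans : ∀ (X : ZMod 3 → Matrix (ZMod p) (ZMod p) R),
      (∑ m : ZMod 3, X m * (X (m - 2))ᵀ) = (∑ m : ZMod 3, X m * (X (m - 1))ᵀ)ᵀ := by
    intro X
    rw [Matrix.transpose_sum]
    refine Fintype.sum_equiv (Equiv.addRight 1) _ _ ?_
    intro m
    simp only [Equiv.coe_addRight]
    rw [Matrix.transpose_mul, Matrix.transpose_transpose]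
    rw [show m + 1 - 1 = m by ring, show m - 2 = m + 1 from by revert m; decide]
  constructor
  · intro h
    constructor
    · have h0 := h 0
      simp only [sub_zero] at h0
      rw [hchar] at h0
      rw [h0, key0]
    · have h1 := h 1
      simp only [e11] at h1
      rw [hchar] at h1
      rw [h1, key1]
  · rintro ⟨h1c, h2c⟩ d
    have hd : d = 0 ∨ d = 1 ∨ d = 2 := by revert d; decide
    rcases hd with rfl | rfl | rfl
    · rw [hchar]
      simp only [sub_zero]
      rw [key0]
      exact h1c
    · rw [hchar]
      simp only [e11]
      rw [key1]
      exact h2c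
    · rw [(htrans (fun i => Qmat p (a i) (b i) (c i)) :
          (∑ m : ZMod 3,
            Qmat p (a m) (b m) (c m) * (Qmat p (a (m - 2)) (b (m - 2)) (c (m - 2)))ᵀ)
          = (∑ m : ZMod 3,
            Qmat p (a m) (b m) (c m) * (Qmat p (a (m - 1)) (b (m - 1)) (c (m - 1)))ᵀ)ᵀ),
        htrans A, ← Matrix.transpose_add, Matrix.transpose_eq_zero]
      rw [hchar]
      simp only [e11]
      rw [key1]
      exact h2c

end core


theorem stmt6 {R : Type*} [CommRing R] [CharP R 2] (p k : ℕ) [Fact (Nat.Prime p)]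
    (hpk : p = 4 * k + 1) (a b c : ZMod 3 → R)
    (A : ZMod 3 → Matrix (ZMod p) (ZMod p) R)
    (hA : ∀ i, ∃ v : ZMod p → R, A i = Matrix.circulant v) :
    (∀ x ∈ Submodule.span R
        (Set.range fun i => Mblk (fun i => Qmat p (a i) (b i) (c i)) A i),
      ∀ y ∈ Submodule.span R
        (Set.range fun i => Mblk (fun i => Qmat p (a i) (b i) (c i)) A i),
        dotProduct x y = 0) ↔
      (∑ i : ZMod 3, A i * (A i)ᵀ =
        Qmat p (∑ i : ZMod 3, (a i) ^ 2)
          (∑ i : ZMod 3, ((b i) ^ 2 + (k : R) * ((b i) ^ 2 + (c i) ^ 2)))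
          (∑ i : ZMod 3, ((c i) ^ 2 + (k : R) * ((b i) ^ 2 + (c i) ^ 2))) ∧
       ∑ i : ZMod 3, A i * (A (i + 2))ᵀ =
        Qmat p (∑ i : ZMod 3, a i * a (i + 2))
          (∑ i : ZMod 3, (a i * b (i + 2) + b i * a (i + 2) + ((k : R) + 1) * (b i * b (i + 2)) +
            (k : R) * (b i * c (i + 2) + c i * b (i + 2)) + (k : R) * (c i * c (i + 2))))
          (∑ i : ZMod 3, (a i * c (i + 2) + c i * a (i + 2) + (k : R) * (b i * b (i + 2)) +
            (k : R) * (b i * c (i + 2) + c i * b (i + 2)) +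
            ((k : R) + 1) * (c i * c (i + 2))))) := by
  rw [selfOrth_iff]
  unfold Mblk
  rw [Matrix.transpose_fromCols, Matrix.fromCols_mul_fromRows,
    blockCirc_mul, blockCirc_mul, blockCirc_add, blockCirc_eq_zero]
  exact main_core p k hpk a b c A
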